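/- Let K be a field of characteristic zero and ∂ = u ∂/∂x + v ∂/∂y the derivation on K[x,y,u,v] with ∂(x)=u, ∂(y)=v, ∂(u)=∂(v)=0. Then Ker(∂) = K[u, v, xv − yu]. -/

import Mathlib

open MvPolynomial

set_option linter.unusedSectionVars false
set_option maxHeartbeats 1000000

/-- The derivation `u ∂/∂x + v ∂/∂y` on `K[x,y,u,v]`, with `x = X 0`, `y = X 1`,
`u = X 2`, `v = X 3`. -/
noncomputable def transDerivation (K : Type*) [CommRing K] :
    Derivation K (MvPolynomial (Fin 4) K) (MvPolynomial (Fin 4) K) :=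
  MvPolynomial.mkDerivation K ![X 2, X 3, 0, 0]

namespace TransKer

variable {K : Type*} [Field K] [CharZero K]

/-- the weight function recording total degree in `x, y` -/
def wxy : Fin 4 → ℕ := ![1, 1, 0, 0]

/-- the three generators `u`, `v`, `xv - yu` of the kernel -/
noncomputable def gens (K : Type*) [Field K] : Fin 3 → MvPolynomial (Fin 4) K :=
  ![X 2, X 3, X 0 * X 3 - X 1 * X 2]

/-- auxiliary substitution used to detect divisibility by `v` -/
noncomputable def bv (K : Type*) [Field K] : Fin 3 → MvPolynomial (Fin 4) K :=
  ![X 2, 0, -(X 1 * X 2)]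

/-- exponent bookkeeping for `bv` evaluated on monomials -/
noncomputable def eexp (m : Fin 3 →₀ ℕ) : Fin 4 →₀ ℕ :=
  Finsupp.single 1 (m 2) + Finsupp.single 2 (m 0 + m 2)

lemma D_X (i : Fin 4) :
    transDerivation K (X i) = ![X 2, X 3, 0, 0] i :=
  MvPolynomial.mkDerivation_X _ _ _

lemma ker_of_mem (p : MvPolynomial (Fin 4) K)
    (hp : p ∈ Algebra.adjoin K ({X 2, X 3, X 0 * X 3 - X 1 * X 2} :
      Set (MvPolynomial (Fin 4) K))) : transDerivation K p = 0 := by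
  induction hp using Algebra.adjoin_induction with
  | mem x hx =>
    rcases hx with rfl | rfl | rfl
    · simpa using D_X (K := K) 2
    · simpa using D_X (K := K) 3
    · rw [map_sub, Derivation.leibniz, Derivation.leibniz, D_X, D_X, D_X, D_X]
      simp only [Matrix.cons_val_zero, Matrix.cons_val_one, Matrix.head_cons]
      simp [smul_eq_mul]
      ring
  | algebraMap r => simp
  | add x y hx hy ihx ihy => rw [map_add, ihx, ihy, add_zero]
  | mul x y hx hy ihx ihy => rw [Derivation.leibniz, ihx, ihy, smul_zero, smul_zero, add_zero]

/-- substitution `x ↦ x + t u`, `y ↦ y + t v` with `t = X 4`. -/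
noncomputable def phi : MvPolynomial (Fin 4) K →ₐ[K] MvPolynomial (Fin 5) K :=
  aeval ![X 0 + X 4 * X 2, X 1 + X 4 * X 3, X 2, X 3]

lemma pderiv4_phi (p : MvPolynomial (Fin 4) K) :
    pderiv 4 (phi p) = phi (transDerivation K p) := by
  induction p using MvPolynomial.induction_on with
  | C a => simp [phi]
  | add p q hp hq => rw [map_add, map_add, map_add, hp, hq, map_add]
  | mul_X p n ih =>
    have hx : pderiv (4 : Fin 5) (phi (X n : MvPolynomial (Fin 4) K))
        = phi (transDerivation K (X n)) := by
      rw [D_X]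
      fin_cases n <;> simp [phi]
    rw [map_mul, Derivation.leibniz, Derivation.leibniz, map_add, smul_eq_mul, smul_eq_mul,
      smul_eq_mul, smul_eq_mul, map_mul, map_mul, ih, hx]

lemma coeff_pderiv {n : ℕ} (q : MvPolynomial (Fin n) K) (i : Fin n) (m : Fin n →₀ ℕ) :
    coeff m (pderiv i q) = (m i + 1 : K) * coeff (m + Finsupp.single i 1) q := by
  induction q using MvPolynomial.induction_on' with
  | add p q hp hq => rw [map_add, coeff_add, coeff_add, hp, hq]; ring
  | monomial s a =>
    rw [pderiv_monomial, coeff_monomial, coeff_monomial]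
    by_cases h : s = m + Finsupp.single i 1
    · have hsi : s i = m i + 1 := by
        rw [h]; simp [Finsupp.add_apply]
      have hsm : s - Finsupp.single i 1 = m := by
        rw [h, add_tsub_cancel_right]
      rw [if_pos hsm, if_pos h, hsi]
      push_cast
      ring
    · rw [if_neg h]
      by_cases hsi : s i = 0
      · split_ifs with h2
        · simp [hsi]
        · ring
      · have : s - Finsupp.single i 1 ≠ m := by
          intro hsm
          apply h
          ext j
          have := DFunLike.congr_fun hsm j
          simp only [Finsupp.tsub_apply, Finsupp.single_apply, Finsupp.add_apply] at this ⊢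
          by_cases hj : i = j
          · subst hj; simp at this ⊢; omega
          · simp [hj] at this ⊢; omega
        rw [if_neg this]
        ring

lemma coeff_eq_zero_of_pderiv4 (q : MvPolynomial (Fin 5) K) (h : pderiv 4 q = 0)
    (m : Fin 5 →₀ ℕ) (hm : m 4 ≠ 0) : coeff m q = 0 := by
  set m' := m - Finsupp.single (4 : Fin 5) 1 with hm'
  have hmm : m' + Finsupp.single (4 : Fin 5) 1 = m := by
    ext j
    simp only [Finsupp.add_apply, Finsupp.tsub_apply, Finsupp.single_apply, hm']
    by_cases hj : (4 : Fin 5) = j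
    · subst hj
      simp only [eq_self_iff_true, if_true]
      omega
    · simp [hj]
  have := coeff_pderiv q 4 m'
  rw [h, coeff_zero, hmm] at this
  have hne : ((m' 4 : K) + 1) ≠ 0 := by
    exact_mod_cast Nat.cast_add_one_ne_zero (R := K) (m' 4)
  field_simp at this
  exact (mul_eq_zero.mp this.symm).resolve_left hne

lemma aeval_congr (q : MvPolynomial (Fin 5) K)
    (h : ∀ m : Fin 5 →₀ ℕ, m 4 ≠ 0 → coeff m q = 0)
    (g g' : Fin 5 → MvPolynomial (Fin 4) K) (hg : ∀ i, i ≠ 4 → g i = g' i) :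
    aeval g q = aeval g' q := by
  conv_lhs => rw [as_sum q]
  conv_rhs => rw [as_sum q]
  rw [map_sum, map_sum]
  refine Finset.sum_congr rfl fun m hm => ?_
  rw [aeval_monomial, aeval_monomial]
  congr 1
  refine Finsupp.prod_congr fun i hi => ?_
  have hi4 : i ≠ 4 := by
    rintro rfl
    exact (mem_support_iff.mp hm) (h m (Finsupp.mem_support_iff.mp hi))
  rw [hg i hi4]

lemma ker_shift (p : MvPolynomial (Fin 4) K) (hp : transDerivation K p = 0)
    (g : Fin 4 → MvPolynomial (Fin 4) K) (s : MvPolynomial (Fin 4) K) :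
    aeval ![g 0 + s * g 2, g 1 + s * g 3, g 2, g 3] p = aeval g p := by
  have h4 : pderiv 4 (phi p) = 0 := by rw [pderiv4_phi, hp, map_zero]
  have key := aeval_congr (phi p) (fun m hm => coeff_eq_zero_of_pderiv4 _ h4 m hm)
    ![g 0, g 1, g 2, g 3, s] ![g 0, g 1, g 2, g 3, 0]
    (by intro i hi; fin_cases i <;> simp_all)
  have e1 : (aeval ![g 0, g 1, g 2, g 3, s]).comp (phi (K := K))
      = aeval ![g 0 + s * g 2, g 1 + s * g 3, g 2, g 3] := by
    rw [phi, comp_aeval]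
    congr 1
    funext i
    fin_cases i <;> simp [mul_comm]
  have e0 : (aeval ![g 0, g 1, g 2, g 3, (0 : MvPolynomial (Fin 4) K)]).comp (phi (K := K))
      = aeval g := by
    rw [phi, comp_aeval]
    congr 1
    funext i
    fin_cases i <;> simp
  calc aeval ![g 0 + s * g 2, g 1 + s * g 3, g 2, g 3] p
      = (aeval ![g 0, g 1, g 2, g 3, s]).comp (phi (K := K)) p := by rw [e1]
    _ = (aeval ![g 0, g 1, g 2, g 3, (0 : MvPolynomial (Fin 4) K)]).comp (phi (K := K)) p := key
    _ = aeval g p := by rw [e0]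

lemma D_eq (p : MvPolynomial (Fin 4) K) :
    transDerivation K p = pderiv 0 p * X 2 + pderiv 1 p * X 3 := by
  have h : transDerivation K
      = ((X 2 : MvPolynomial (Fin 4) K) • pderiv 0
          + (X 3 : MvPolynomial (Fin 4) K) • pderiv 1 :
          Derivation K (MvPolynomial (Fin 4) K) (MvPolynomial (Fin 4) K)) := by
    apply MvPolynomial.derivation_ext
    intro i
    fin_cases i <;>
      simp [transDerivation, MvPolynomial.mkDerivation_X]
  rw [h]
  simp only [Derivation.add_apply, Derivation.coe_smul, Pi.smul_apply, smul_eq_mul]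
  ring

lemma coeff_D (p : MvPolynomial (Fin 4) K) (m : Fin 4 →₀ ℕ) :
    coeff m (transDerivation K p) =
      (if m 2 = 0 then 0 else
        ((m 0 : K) + 1) * coeff (m - Finsupp.single 2 1 + Finsupp.single 0 1) p)
    + (if m 3 = 0 then 0 else
        ((m 1 : K) + 1) * coeff (m - Finsupp.single 3 1 + Finsupp.single 1 1) p) := by
  classical
  rw [D_eq, coeff_add, coeff_mul_X', coeff_mul_X', coeff_pderiv, coeff_pderiv]
  have h2 : (m - Finsupp.single (2 : Fin 4) (1 : ℕ)) 0 = m 0 := by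
    simp [Finsupp.tsub_apply, Finsupp.single_apply]
  have h3 : (m - Finsupp.single (3 : Fin 4) (1 : ℕ)) 1 = m 1 := by
    simp [Finsupp.tsub_apply, Finsupp.single_apply]
  rw [h2, h3]
  congr 1
  · by_cases h : m 2 = 0 <;> simp [Finsupp.mem_support_iff, h]
  · by_cases h : m 3 = 0 <;> simp [Finsupp.mem_support_iff, h]

lemma weight_wxy (m : Fin 4 →₀ ℕ) : Finsupp.weight wxy m = m 0 + m 1 := by
  rw [Finsupp.weight_apply, Finsupp.sum_fintype _ _ (fun i => by simp)]
  rw [Fin.sum_univ_four]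
  simp [wxy]

lemma D_whc (p : MvPolynomial (Fin 4) K) (d : ℕ) :
    transDerivation K (weightedHomogeneousComponent wxy (d + 1) p)
      = weightedHomogeneousComponent wxy d (transDerivation K p) := by
  classical
  ext m
  simp only [coeff_D, coeff_weightedHomogeneousComponent, weight_wxy, Finsupp.add_apply,
    Finsupp.tsub_apply, Finsupp.single_apply]
  norm_num
  split_ifs
  all_goals try first | ring | (exfalso; omega)
  all_goals try simp_all
  all_goals try (exfalso; omega)

lemma D_whc0 (p : MvPolynomial (Fin 4) K) :
    transDerivation K (weightedHomogeneousComponent wxy 0 p) = 0 := by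
  classical
  ext m
  simp only [coeff_D, coeff_weightedHomogeneousComponent, weight_wxy, Finsupp.add_apply,
    Finsupp.tsub_apply, Finsupp.single_apply, coeff_zero]
  norm_num
  try split_ifs
  all_goals try first | ring | (exfalso; omega)
  all_goals try simp_all
  all_goals try (exfalso; omega)

lemma monomial_fin3 (m : Fin 3 →₀ ℕ) (c : K) :
    (monomial m c : MvPolynomial (Fin 3) K)
      = C c * X 0 ^ m 0 * X 1 ^ m 1 * X 2 ^ m 2 := by
  rw [monomial_eq, Finsupp.prod_fintype _ _ (fun i => by simp), Fin.prod_univ_three]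
  ring

lemma monomial_fin4 (m : Fin 4 →₀ ℕ) (c : K) :
    (monomial m c : MvPolynomial (Fin 4) K)
      = C c * X 0 ^ m 0 * X 1 ^ m 1 * X 2 ^ m 2 * X 3 ^ m 3 := by
  rw [monomial_eq, Finsupp.prod_fintype _ _ (fun i => by simp), Fin.prod_univ_four]
  ring

lemma aeval_scale (d : ℕ) (p : MvPolynomial (Fin 4) K)
    (hp : p.IsWeightedHomogeneous wxy d) :
    aeval ![X 0 * X 3, X 1 * X 3, X 2, X 3] p = X 3 ^ d * p := by
  conv_lhs => rw [as_sum p]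
  conv_rhs => rw [as_sum p]
  rw [map_sum, Finset.mul_sum]
  refine Finset.sum_congr rfl fun m hm => ?_
  have hd : m 0 + m 1 = d := by
    have := hp (mem_support_iff.mp hm)
    rw [weight_wxy] at this
    omega
  rw [monomial_fin4, ← hd]
  rw [map_mul, map_mul, map_mul, map_mul, map_pow, map_pow, map_pow, map_pow, aeval_X,
    aeval_X, aeval_X, aeval_X, aeval_C]
  simp only [Matrix.cons_val_zero, Matrix.cons_val_one, Matrix.head_cons,
    Matrix.cons_val_two, Matrix.tail_cons, Matrix.cons_val_three, Matrix.head_fin_const]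
  rw [algebraMap_eq]
  ring

lemma eexp_0 (m : Fin 3 →₀ ℕ) : eexp m 0 = 0 := by simp [eexp, Finsupp.single_apply]
lemma eexp_1 (m : Fin 3 →₀ ℕ) : eexp m 1 = m 2 := by simp [eexp, Finsupp.single_apply]
lemma eexp_2 (m : Fin 3 →₀ ℕ) : eexp m 2 = m 0 + m 2 := by simp [eexp, Finsupp.single_apply]
lemma eexp_3 (m : Fin 3 →₀ ℕ) : eexp m 3 = 0 := by simp [eexp, Finsupp.single_apply]

lemma eexp_inj {m m' : Fin 3 →₀ ℕ} (hm : m 1 = 0) (hm' : m' 1 = 0)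
    (h : eexp m = eexp m') : m = m' := by
  have h1 := DFunLike.congr_fun h 1
  have h2 := DFunLike.congr_fun h 2
  rw [eexp_1, eexp_1] at h1
  rw [eexp_2, eexp_2] at h2
  ext j
  fin_cases j
  · show m 0 = m' 0; omega
  · show m 1 = m' 1; omega
  · exact h1

lemma beta_monomial (m : Fin 3 →₀ ℕ) (c : K) (hm : m 1 = 0) :
    aeval (bv K) (monomial m c) = monomial (eexp m) ((-1) ^ (m 2) * c) := by
  rw [monomial_fin3, monomial_fin4, eexp_0, eexp_1, eexp_2, eexp_3]
  rw [map_mul, map_mul, map_mul, map_pow, map_pow, map_pow, aeval_X, aeval_X, aeval_X, aeval_C,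
    hm, algebraMap_eq, map_mul, map_pow, map_neg, map_one]
  simp only [bv, Matrix.cons_val_zero, Matrix.cons_val_one, Matrix.head_cons,
    Matrix.cons_val_two, Matrix.tail_cons]
  ring

lemma beta_monomial_zero (m : Fin 3 →₀ ℕ) (c : K) (hm : m 1 ≠ 0) :
    aeval (bv K) (monomial m c) = 0 := by
  rw [monomial_fin3, map_mul, map_mul, map_mul, map_pow, map_pow, map_pow, aeval_X, aeval_X,
    aeval_X]
  simp only [bv, Matrix.cons_val_zero, Matrix.cons_val_one, Matrix.head_cons,
    Matrix.cons_val_two, Matrix.tail_cons]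
  rw [zero_pow hm]
  ring

lemma beta_coeff (f : MvPolynomial (Fin 3) K) (hf : aeval (bv K) f = 0)
    (m : Fin 3 →₀ ℕ) (hm : m 1 = 0) : coeff m f = 0 := by
  by_cases hms : m ∈ f.support
  · have key : coeff (eexp m) (aeval (bv K) f) = (-1) ^ (m 2) * coeff m f := by
      conv_lhs => rw [as_sum f, map_sum]
      rw [coeff_sum]
      rw [Finset.sum_eq_single m]
      · rw [beta_monomial m _ hm, coeff_monomial, if_pos rfl]
      · intro m' hm' hne
        by_cases h1 : m' 1 = 0
        · rw [beta_monomial m' _ h1, coeff_monomial]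
          rw [if_neg (fun he => hne (eexp_inj h1 hm he))]
        · rw [beta_monomial_zero m' _ h1, coeff_zero]
      · intro h
        exact absurd hms h
    rw [hf, coeff_zero] at key
    have hne : ((-1 : K) ^ (m 2)) ≠ 0 := pow_ne_zero _ (by norm_num)
    exact (mul_eq_zero.mp key.symm).resolve_left hne
  · exact notMem_support_iff.mp hms

lemma X1_dvd (f : MvPolynomial (Fin 3) K) (h : ∀ m : Fin 3 →₀ ℕ, m 1 = 0 → coeff m f = 0) :
    ∃ f1, f = X 1 * f1 := by
  refine ⟨∑ m ∈ f.support, monomial (m - Finsupp.single 1 1) (coeff m f), ?_⟩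
  conv_lhs => rw [as_sum f]
  rw [Finset.mul_sum]
  refine Finset.sum_congr rfl fun m hm => ?_
  have hm1 : m 1 ≠ 0 := fun h0 => (mem_support_iff.mp hm) (h m h0)
  have hexp : Finsupp.single (1 : Fin 3) (1 : ℕ) + (m - Finsupp.single 1 1) = m := by
    ext j
    simp only [Finsupp.add_apply, Finsupp.tsub_apply, Finsupp.single_apply]
    split_ifs with hj
    · subst hj; omega
    · omega
  rw [X, monomial_mul, one_mul, hexp]

lemma eta_gens (f : MvPolynomial (Fin 3) K) (r : MvPolynomial (Fin 4) K)
    (h : aeval (gens K) f = X 3 * r) : aeval (bv K) f = 0 := by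
  have heta : (aeval ![X 0, X 1, X 2, (0 : MvPolynomial (Fin 4) K)]).comp
      (aeval (gens K)) = aeval (bv K) := by
    rw [comp_aeval]
    congr 1
    funext i
    fin_cases i <;> simp [gens, bv]
  have h2 := congrArg (aeval ![X 0, X 1, X 2, (0 : MvPolynomial (Fin 4) K)]) h
  rw [map_mul] at h2
  rw [show ((aeval ![X 0, X 1, X 2, (0 : MvPolynomial (Fin 4) K)])
      ((aeval (gens K)) f)) = (aeval (bv K)) f from AlgHom.congr_fun heta f] at h2
  rw [h2]
  simp

lemma desc (f : MvPolynomial (Fin 3) K) (r : MvPolynomial (Fin 4) K)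
    (h : aeval (gens K) f = X 3 * r) :
    ∃ f' : MvPolynomial (Fin 3) K, aeval (gens K) f' = r := by
  obtain ⟨f1, rfl⟩ := X1_dvd f (fun m hm => beta_coeff f (eta_gens f r h) m hm)
  refine ⟨f1, ?_⟩
  rw [map_mul] at h
  have hX : aeval (gens K) (X 1 : MvPolynomial (Fin 3) K) = X 3 := by simp [gens]
  rw [hX] at h
  exact mul_left_cancel₀ (X_ne_zero 3) h

lemma desc_pow (d : ℕ) : ∀ (f : MvPolynomial (Fin 3) K) (r : MvPolynomial (Fin 4) K),
    aeval (gens K) f = X 3 ^ d * r →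
    ∃ f' : MvPolynomial (Fin 3) K, aeval (gens K) f' = r := by
  induction d with
  | zero => intro f r h; exact ⟨f, by rw [h, pow_zero, one_mul]⟩
  | succ e ih =>
    intro f r h
    rw [pow_succ, mul_assoc] at h
    obtain ⟨f1, hf1⟩ := ih f (X 3 * r) h
    exact desc f1 r hf1

lemma rho_comp (p : MvPolynomial (Fin 4) K) :
    aeval (gens K) (aeval (![X 2, 0, X 0, X 1] : Fin 4 → MvPolynomial (Fin 3) K) p)
      = aeval ![X 0 * X 3 - X 1 * X 2, 0, X 2, X 3] p := by
  have h : (aeval (gens K)).comp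
      (aeval (![X 2, 0, X 0, X 1] : Fin 4 → MvPolynomial (Fin 3) K))
      = aeval ![X 0 * X 3 - X 1 * X 2, 0, X 2, X 3] := by
    rw [comp_aeval]
    congr 1
    funext i
    fin_cases i <;> simp [gens]
  exact AlgHom.congr_fun h p

lemma gens_range :
    ({X 2, X 3, X 0 * X 3 - X 1 * X 2} : Set (MvPolynomial (Fin 4) K))
      = Set.range (gens K) := by
  ext x
  constructor
  · rintro (rfl | rfl | rfl)
    exacts [⟨0, by simp [gens]⟩, ⟨1, by simp [gens]⟩, ⟨2, by simp [gens]⟩]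
  · rintro ⟨i, rfl⟩
    fin_cases i
    · left; simp [gens]
    · right; left; simp [gens]
    · right; right; simp [gens]

lemma whc_mem (p : MvPolynomial (Fin 4) K) (hp : transDerivation K p = 0) (d : ℕ) :
    weightedHomogeneousComponent wxy d p ∈
      Algebra.adjoin K ({X 2, X 3, X 0 * X 3 - X 1 * X 2} :
        Set (MvPolynomial (Fin 4) K)) := by
  set q := weightedHomogeneousComponent wxy d p with hq
  have hker : transDerivation K q = 0 := by
    cases d with
    | zero => exact D_whc0 p
    | succ e => rw [hq, D_whc, hp, map_zero]
  have hscale : aeval ![X 0 * X 3, X 1 * X 3, X 2, X 3] q = X 3 ^ d * q :=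
    aeval_scale d q (weightedHomogeneousComponent_isWeightedHomogeneous d p)
  have hshift := ker_shift q hker ![X 0 * X 3 - X 1 * X 2, 0, X 2, X 3] (X 1)
  have hv : (![(![X 0 * X 3 - X 1 * X 2, 0, X 2, X 3] : Fin 4 → MvPolynomial (Fin 4) K) 0
        + X 1 * (![X 0 * X 3 - X 1 * X 2, 0, X 2, X 3] : Fin 4 → MvPolynomial (Fin 4) K) 2,
      (![X 0 * X 3 - X 1 * X 2, 0, X 2, X 3] : Fin 4 → MvPolynomial (Fin 4) K) 1
        + X 1 * (![X 0 * X 3 - X 1 * X 2, 0, X 2, X 3] : Fin 4 → MvPolynomial (Fin 4) K) 3,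
      (![X 0 * X 3 - X 1 * X 2, 0, X 2, X 3] : Fin 4 → MvPolynomial (Fin 4) K) 2,
      (![X 0 * X 3 - X 1 * X 2, 0, X 2, X 3] : Fin 4 → MvPolynomial (Fin 4) K) 3] :
        Fin 4 → MvPolynomial (Fin 4) K)
      = ![X 0 * X 3, X 1 * X 3, X 2, X 3] := by
    funext i
    fin_cases i <;> simp <;> ring
  rw [hv] at hshift
  have hkey : aeval (gens K)
      (aeval (![X 2, 0, X 0, X 1] : Fin 4 → MvPolynomial (Fin 3) K) q) = X 3 ^ d * q := by
    rw [rho_comp, ← hshift, hscale]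
  obtain ⟨f', hf'⟩ := desc_pow d _ q hkey
  rw [gens_range, Algebra.adjoin_range_eq_range_aeval]
  exact ⟨f', hf'⟩

end TransKer

/-- For `∂ = u ∂/∂x + v ∂/∂y` on `K[x,y,u,v]` (`K` of characteristic zero),
`Ker ∂ = K[u, v, xv − yu]`. -/
theorem transDerivation_kernel (K : Type*) [Field K] [CharZero K] :
    ∀ p : MvPolynomial (Fin 4) K,
      transDerivation K p = 0 ↔
      p ∈ Algebra.adjoin K ({X 2, X 3, X 0 * X 3 - X 1 * X 2} :
        Set (MvPolynomial (Fin 4) K)) := by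
  intro p
  constructor
  · intro hp
    have hsum := MvPolynomial.sum_weightedHomogeneousComponent TransKer.wxy p
    rw [← hsum, finsum_eq_sum _ (MvPolynomial.weightedHomogeneousComponent_finsupp p)]
    exact Subalgebra.sum_mem _ (fun d _ => TransKer.whc_mem p hp d)
  · exact TransKer.ker_of_mem p
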